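/- Let g : ℝ → [0,1] be a measurable function. Then the function q ↦ ((q+1)/2 · ∫_{-∞}^{∞} |t|^q g(t) dt)^{1/(q+1)} is non-decreasing on (-1, ∞). That is, for all -1 < q < p, ((q+1)/2 · ∫ |t|^q g(t) dt)^{1/(q+1)} ≤ ((p+1)/2 · ∫ |t|^p g(t) dt)^{1/(p+1)}. -/

import Mathlib

open MeasureTheory Set intervalIntegral
open scoped ENNReal

lemma abs_rpow_intervalIntegrable' {r a : ℝ} (hr : -1 < r) (ha : 0 ≤ a) :
    IntervalIntegrable (fun t : ℝ => |t| ^ r) volume (-a) a := by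
  have h1 : IntervalIntegrable (fun t : ℝ => |t| ^ r) volume 0 a := by
    constructor
    · refine (intervalIntegrable_rpow' (a := 0) (b := a) hr).1.congr_fun
        (fun t ht => ?_) measurableSet_Ioc
      rw [abs_of_pos ht.1]
    · simp [Ioc_eq_empty_of_le ha]
  have h2 : IntervalIntegrable (fun t : ℝ => |t| ^ r) volume (-a) 0 := by
    have := ((IntervalIntegrable.iff_comp_neg (by simp)).mp h1)
    simp only [abs_neg, neg_zero] at this
    exact this.symm
  exact h2.trans h1

lemma integral_abs_rpow' {r a : ℝ} (hr : -1 < r) (ha : 0 ≤ a) :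
    ∫ t in (-a)..a, |t| ^ r = 2 * a ^ (r + 1) / (r + 1) := by
  have h1 : IntervalIntegrable (fun t : ℝ => |t| ^ r) volume 0 a := by
    constructor
    · refine (intervalIntegrable_rpow' (a := 0) (b := a) hr).1.congr_fun
        (fun t ht => ?_) measurableSet_Ioc
      rw [abs_of_pos ht.1]
    · simp [Ioc_eq_empty_of_le ha]
  have h2 : IntervalIntegrable (fun t : ℝ => |t| ^ r) volume (-a) 0 := by
    have := ((IntervalIntegrable.iff_comp_neg (by simp)).mp h1)
    simp only [abs_neg, neg_zero] at this
    exact this.symm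
  have key : ∫ t in (0:ℝ)..a, |t| ^ r = a ^ (r + 1) / (r + 1) := by
    rw [intervalIntegral.integral_congr (g := fun t : ℝ => t ^ r) ?_,
      integral_rpow (Or.inl hr)]
    · rw [Real.zero_rpow (by linarith), sub_zero]
    · intro t ht
      rw [uIcc_of_le ha] at ht
      simp [abs_of_nonneg ht.1]
  have neg : ∫ t in (-a)..(0:ℝ), |t| ^ r = ∫ t in (0:ℝ)..a, |t| ^ r := by
    have := intervalIntegral.integral_comp_neg (a := -a) (b := 0)
      (f := fun t : ℝ => |t| ^ r)
    simp only [abs_neg, neg_zero, neg_neg] at this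
    exact this
  rw [← intervalIntegral.integral_add_adjacent_intervals h2 h1, neg, key]
  ring

lemma lintegral_abs_rpow_Icc' {r a : ℝ} (hr : -1 < r) (ha : 0 ≤ a) :
    ∫⁻ t in Icc (-a) a, ENNReal.ofReal (|t| ^ r) =
      ENNReal.ofReal (2 * a ^ (r + 1) / (r + 1)) := by
  have hint : IntegrableOn (fun t : ℝ => |t| ^ r) (Ioc (-a) a) :=
    ((abs_rpow_intervalIntegrable' hr ha).1)
  rw [← setLIntegral_congr (Ioc_ae_eq_Icc (μ := volume) (a := -a) (b := a)),
    ← ofReal_integral_eq_lintegral_ofReal hint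
      (Filter.Eventually.of_forall fun t => Real.rpow_nonneg (abs_nonneg t) r),
    ← intervalIntegral.integral_of_le (by linarith), integral_abs_rpow' hr ha]

/-- For measurable `g : ℝ → [0,1]`, the function
`q ↦ ((q+1)/2 · ∫ |t|^q g(t) dt)^(1/(q+1))` is non-decreasing on `(-1, ∞)`.
Integrals are Lebesgue integrals (possibly infinite). -/
theorem moment_monotone
    (g : ℝ → ℝ) (hg : Measurable g) (hg0 : ∀ t, 0 ≤ g t) (hg1 : ∀ t, g t ≤ 1)
    (q p : ℝ) (hq : -1 < q) (hqp : q < p) :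
    (ENNReal.ofReal ((q + 1) / 2) *
        ∫⁻ t : ℝ, ENNReal.ofReal (|t| ^ q * g t)) ^ (1 / (q + 1)) ≤
      (ENNReal.ofReal ((p + 1) / 2) *
        ∫⁻ t : ℝ, ENNReal.ofReal (|t| ^ p * g t)) ^ (1 / (p + 1)) := by
  have hp : -1 < p := lt_trans hq hqp
  have hq1 : (0:ℝ) < q + 1 := by linarith
  have hp1 : (0:ℝ) < p + 1 := by linarith
  set Iq := ∫⁻ t : ℝ, ENNReal.ofReal (|t| ^ q * g t) with hIq
  set Ip := ∫⁻ t : ℝ, ENNReal.ofReal (|t| ^ p * g t) with hIp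
  have mf : ∀ r : ℝ, Measurable fun t : ℝ => ENNReal.ofReal (|t| ^ r * g t) := by
    intro r; fun_prop
  have mf' : ∀ r : ℝ, Measurable fun t : ℝ => ENNReal.ofReal (|t| ^ r * (1 - g t)) := by
    intro r; fun_prop
  -- trivial case Iq = 0
  rcases eq_or_ne Iq 0 with hIq0 | hIq0
  · rw [hIq0, mul_zero, ENNReal.zero_rpow_of_pos (by positivity)]
    exact zero_le
  -- case Iq = ∞
  rcases eq_or_ne Iq ∞ with hIqt | hIqt
  · have hsplit : Iq = (∫⁻ t in Icc (-1:ℝ) 1, ENNReal.ofReal (|t| ^ q * g t)) +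
        ∫⁻ t in (Icc (-1:ℝ) 1)ᶜ, ENNReal.ofReal (|t| ^ q * g t) :=
      hIq.trans (lintegral_add_compl (μ := volume) _ measurableSet_Icc).symm
    have hfin : ∫⁻ t in Icc (-1:ℝ) 1, ENNReal.ofReal (|t| ^ q * g t) < ∞ := by
      refine lt_of_le_of_lt ?_
        (lt_of_le_of_lt (le_of_eq (lintegral_abs_rpow_Icc' hq zero_le_one))
          ENNReal.ofReal_lt_top)
      refine lintegral_mono fun t => ENNReal.ofReal_le_ofReal ?_
      calc |t| ^ q * g t ≤ |t| ^ q * 1 :=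
            mul_le_mul_of_nonneg_left (hg1 t) (Real.rpow_nonneg (abs_nonneg t) q)
        _ = |t| ^ q := mul_one _
    have hout : ∫⁻ t in (Icc (-1:ℝ) 1)ᶜ, ENNReal.ofReal (|t| ^ q * g t) = ∞ := by
      by_contra hne
      have : Iq < ∞ := hsplit ▸ ENNReal.add_lt_top.mpr ⟨hfin, lt_top_iff_ne_top.mpr hne⟩
      exact this.ne hIqt
    have hle : ∫⁻ t in (Icc (-1:ℝ) 1)ᶜ, ENNReal.ofReal (|t| ^ q * g t) ≤
        ∫⁻ t in (Icc (-1:ℝ) 1)ᶜ, ENNReal.ofReal (|t| ^ p * g t) := by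
      refine lintegral_mono_ae ?_
      filter_upwards [ae_restrict_mem measurableSet_Icc.compl] with t ht
      refine ENNReal.ofReal_le_ofReal (mul_le_mul_of_nonneg_right ?_ (hg0 t))
      refine Real.rpow_le_rpow_of_exponent_le ?_ hqp.le
      simp only [mem_compl_iff, mem_Icc, not_and_or, not_le] at ht
      rcases ht with h | h
      · calc (1:ℝ) ≤ -t := by linarith
          _ ≤ |t| := (neg_le_abs t)
      · exact le_trans h.le (le_abs_self t)
    have hIpt : Ip = ∞ := by
      rw [eq_top_iff]
      calc (⊤ : ℝ≥0∞) = _ := hout.symm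
        _ ≤ _ := hle
        _ ≤ Ip := setLIntegral_le_lintegral _ _
    rw [hIpt, ENNReal.mul_top (by simp [ENNReal.ofReal_eq_zero]; linarith),
      ENNReal.top_rpow_of_pos (by positivity)]
    exact le_top
  -- main case: 0 < Iq < ∞
  have hIqR : 0 < Iq.toReal := ENNReal.toReal_pos hIq0 hIqt
  have hx0 : 0 < (q + 1) / 2 * Iq.toReal := mul_pos (by positivity) hIqR
  set a : ℝ := ((q + 1) / 2 * Iq.toReal) ^ (1 / (q + 1)) with hadef
  have ha : 0 < a := Real.rpow_pos_of_pos hx0 _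
  have haq : a ^ (q + 1) = (q + 1) / 2 * Iq.toReal := by
    rw [hadef, ← Real.rpow_mul hx0.le, one_div_mul_cancel (ne_of_gt hq1),
      Real.rpow_one]
  have hIqval : Iq = ENNReal.ofReal (2 * a ^ (q + 1) / (q + 1)) := by
    rw [haq, show 2 * ((q + 1) / 2 * Iq.toReal) / (q + 1) = Iq.toReal by
      field_simp]
    exact (ENNReal.ofReal_toReal hIqt).symm
  set s : Set ℝ := Icc (-a) a with hs
  have hms : MeasurableSet s := measurableSet_Icc
  set Aq := ∫⁻ t in s, ENNReal.ofReal (|t| ^ q * g t) with hAq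
  set Bq := ∫⁻ t in sᶜ, ENNReal.ofReal (|t| ^ q * g t) with hBq
  set Cq := ∫⁻ t in s, ENNReal.ofReal (|t| ^ q * (1 - g t)) with hCq
  set Ap := ∫⁻ t in s, ENNReal.ofReal (|t| ^ p * g t) with hAp
  set Bp := ∫⁻ t in sᶜ, ENNReal.ofReal (|t| ^ p * g t) with hBp
  set Cp := ∫⁻ t in s, ENNReal.ofReal (|t| ^ p * (1 - g t)) with hCp
  have hK : ∀ r : ℝ, -1 < r →
      (∫⁻ t in s, ENNReal.ofReal (|t| ^ r * g t)) +
        (∫⁻ t in s, ENNReal.ofReal (|t| ^ r * (1 - g t))) =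
        ENNReal.ofReal (2 * a ^ (r + 1) / (r + 1)) := by
    intro r hr
    rw [← lintegral_abs_rpow_Icc' hr ha.le, ← lintegral_add_left (mf r)]
    refine lintegral_congr fun t => ?_
    rw [← ENNReal.ofReal_add
        (mul_nonneg (Real.rpow_nonneg (abs_nonneg t) r) (hg0 t))
        (mul_nonneg (Real.rpow_nonneg (abs_nonneg t) r) (by linarith [hg1 t]))]
    congr 1; ring
  have hsplitq : Iq = Aq + Bq := (lintegral_add_compl _ hms (μ := volume)).symm
  have hsplitp : Ip = Ap + Bp := (lintegral_add_compl _ hms (μ := volume)).symm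
  have hAqfin : Aq ≠ ∞ :=
    (lt_of_le_of_lt le_self_add ((hK q hq) ▸ ENNReal.ofReal_lt_top)).ne
  have hBqCq : Bq = Cq := by
    have h1 : Aq + Bq = Aq + Cq := by rw [← hsplitq, hIqval, ← hK q hq]
    exact (ENNReal.add_right_inj hAqfin).mp h1
  have hCple : Cp ≤ ENNReal.ofReal (a ^ (p - q)) * Cq := by
    have h0 : ∀ᵐ t : ℝ ∂(volume.restrict s), t ≠ 0 :=
      ae_restrict_of_ae (by rw [ae_iff]; simp)
    calc Cp ≤ ∫⁻ t in s, ENNReal.ofReal (a ^ (p - q) * (|t| ^ q * (1 - g t))) := by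
          refine lintegral_mono_ae ?_
          filter_upwards [ae_restrict_mem hms, h0] with t hts ht0
          refine ENNReal.ofReal_le_ofReal ?_
          have habs : 0 < |t| := abs_pos.mpr ht0
          have hta : |t| ≤ a := abs_le.mpr ⟨hts.1, hts.2⟩
          have hrw : |t| ^ p = |t| ^ (p - q) * |t| ^ q := by
            rw [← Real.rpow_add habs]; ring_nf
          rw [hrw, mul_assoc]
          refine mul_le_mul_of_nonneg_right
            (Real.rpow_le_rpow habs.le hta (by linarith)) ?_
          exact mul_nonneg (Real.rpow_nonneg (abs_nonneg t) q) (by linarith [hg1 t])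
      _ = ENNReal.ofReal (a ^ (p - q)) * Cq := by
          simp_rw [ENNReal.ofReal_mul (Real.rpow_nonneg ha.le _)]
          exact lintegral_const_mul' _ _ ENNReal.ofReal_ne_top
  have hBple : ENNReal.ofReal (a ^ (p - q)) * Bq ≤ Bp := by
    calc ENNReal.ofReal (a ^ (p - q)) * Bq
        = ∫⁻ t in sᶜ, ENNReal.ofReal (a ^ (p - q) * (|t| ^ q * g t)) := by
          simp_rw [ENNReal.ofReal_mul (Real.rpow_nonneg ha.le _)]
          exact (lintegral_const_mul' _ _ ENNReal.ofReal_ne_top).symm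
      _ ≤ Bp := by
          refine lintegral_mono_ae ?_
          filter_upwards [ae_restrict_mem hms.compl] with t hts
          refine ENNReal.ofReal_le_ofReal ?_
          have hta : a ≤ |t| := by
            simp only [hs, mem_compl_iff, mem_Icc, not_and_or, not_le] at hts
            rcases hts with h | h
            · calc a ≤ -t := by linarith
                _ ≤ |t| := neg_le_abs t
            · exact le_trans h.le (le_abs_self t)
          have habs : 0 < |t| := lt_of_lt_of_le ha hta
          have hrw : |t| ^ p = |t| ^ (p - q) * |t| ^ q := by
            rw [← Real.rpow_add habs]; ring_nf
          rw [hrw, mul_assoc]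
          exact mul_le_mul_of_nonneg_right
            (Real.rpow_le_rpow ha.le hta (by linarith))
            (mul_nonneg (Real.rpow_nonneg (abs_nonneg t) q) (hg0 t))
  have hmain : ENNReal.ofReal (2 * a ^ (p + 1) / (p + 1)) ≤ Ip := by
    calc ENNReal.ofReal (2 * a ^ (p + 1) / (p + 1)) = Ap + Cp := (hK p hp).symm
      _ ≤ Ap + ENNReal.ofReal (a ^ (p - q)) * Cq := add_le_add_right hCple _
      _ = Ap + ENNReal.ofReal (a ^ (p - q)) * Bq := by rw [hBqCq]
      _ ≤ Ap + Bp := add_le_add_right hBple _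
      _ = Ip := hsplitp.symm
  have hLHS : (ENNReal.ofReal ((q + 1) / 2) * Iq) ^ (1 / (q + 1)) =
      ENNReal.ofReal a := by
    rw [hIqval, ← ENNReal.ofReal_mul (by positivity),
      show (q + 1) / 2 * (2 * a ^ (q + 1) / (q + 1)) = a ^ (q + 1) by field_simp,
      ENNReal.ofReal_rpow_of_pos (Real.rpow_pos_of_pos ha _),
      ← Real.rpow_mul ha.le, mul_one_div_cancel (ne_of_gt hq1), Real.rpow_one]
  have hRHS : (ENNReal.ofReal ((p + 1) / 2) *
      ENNReal.ofReal (2 * a ^ (p + 1) / (p + 1))) ^ (1 / (p + 1)) =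
      ENNReal.ofReal a := by
    rw [← ENNReal.ofReal_mul (by positivity),
      show (p + 1) / 2 * (2 * a ^ (p + 1) / (p + 1)) = a ^ (p + 1) by field_simp,
      ENNReal.ofReal_rpow_of_pos (Real.rpow_pos_of_pos ha _),
      ← Real.rpow_mul ha.le, mul_one_div_cancel (ne_of_gt hp1), Real.rpow_one]
  rw [hLHS, ← hRHS]
  exact ENNReal.rpow_le_rpow (mul_le_mul_right hmain _) (by positivity)
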